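/- Let n be sufficiently large, let G̃ be an n-fit graph with vertex set V whose edges are colored red and blue, and let V1, V2 ⊆ V be disjoint sets with |V1|, |V2| ≥ 0.99n such that every edge of G̃ with one end in V1 and the other in V2 is blue. If there exists a vertex w ∈ V with at least n^{0.9} blue neighbors in V1 and at least n^{0.9} blue neighbors in V2, then the blue graph contains a cycle C_ℓ for every ℓ with 3 ≤ ℓ ≤ n. -/

import Mathlib

open SimpleGraph

/-- `e(S,T)`: the number of ordered pairs `(v,w)` with `v ∈ S`, `w ∈ T` and `v` adjacent to `w`;
this counts edges with one end in `S` and the other in `T`, edges inside `S ∩ T` twice. -/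
noncomputable def interCount {V : Type} (G : SimpleGraph V) (S T : Set V) : ℕ :=
  {p : V × V | p.1 ∈ S ∧ p.2 ∈ T ∧ G.Adj p.1 p.2}.ncard

/-- The degree of a vertex. -/
noncomputable def degCount {V : Type} (G : SimpleGraph V) (v : V) : ℕ :=
  (G.neighborSet v).ncard

/-- The codegree of a pair of vertices. -/
noncomputable def codegCount {V : Type} (G : SimpleGraph V) (v w : V) : ℕ :=
  (G.neighborSet v ∩ G.neighborSet w).ncard

/-- A graph is `n`-fit if it has `2n-1` vertices, `⌈(n+1)(2n-1)/2⌉` edges, minimum degree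
exactly `n+1`, all codegrees within `n^0.7` of `n/2`, and `|e(S,T) - |S||T|/2| ≤ n^1.7`
for all vertex sets `S`, `T`. -/
def IsNFit {V : Type} (n : ℕ) (G : SimpleGraph V) : Prop :=
  Nat.card V = 2 * n - 1 ∧
  G.edgeSet.ncard = ((n + 1) * (2 * n - 1) + 1) / 2 ∧
  (∀ v : V, n + 1 ≤ degCount G v) ∧
  (∃ v : V, degCount G v = n + 1) ∧
  (∀ v w : V, v ≠ w → |(codegCount G v w : ℝ) - n / 2| ≤ (n : ℝ) ^ (0.7 : ℝ)) ∧
  (∀ S T : Set V, |(interCount G S T : ℝ) - S.ncard * T.ncard / 2| ≤ (n : ℝ) ^ (1.7 : ℝ))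

/-- `G` contains a cycle of length `m` (a copy of `C_m`). -/
def HasCycleLen {V : Type} (G : SimpleGraph V) (m : ℕ) : Prop :=
  ∃ (v : V) (c : G.Walk v v), c.IsCycle ∧ c.length = m

/-- `G` contains a path of length `k` (with `k` edges) joining `u` and `v`. -/
def HasPathLen {V : Type} (G : SimpleGraph V) (u v : V) (k : ℕ) : Prop :=
  ∃ p : G.Walk u v, p.IsPath ∧ p.length = k

/-- `G → (C_n, C_k)`: every red/blue coloring of the edges of `G` (the red edges forming a
subgraph `R ≤ G`, the blue ones being `G \ R`) yields a red `C_n` or a blue `C_k`. -/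
def ArrowsCC {V : Type} (G : SimpleGraph V) (n k : ℕ) : Prop :=
  ∀ R : SimpleGraph V, R ≤ G → HasCycleLen R n ∨ HasCycleLen (G \ R) k

/-- The density of a pair of vertex sets. -/
noncomputable def dens {V : Type} (G : SimpleGraph V) (S T : Set V) : ℝ :=
  (interCount G S T : ℝ) / (S.ncard * T.ncard)

/-- `(V1, V2)` is an `ε`-regular pair. -/
def IsRegularPair {V : Type} (G : SimpleGraph V) (ε : ℝ) (V1 V2 : Set V) : Prop :=
  ∀ W1 W2 : Set V, W1 ⊆ V1 → W2 ⊆ V2 →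
    ε * V1.ncard ≤ (W1.ncard : ℝ) → ε * V2.ncard ≤ (W2.ncard : ℝ) →
    |dens G V1 V2 - dens G W1 W2| ≤ ε

/-- `(V1, V2)` is a strongly `ε`-regular pair. -/
def IsStronglyRegularPair {V : Type} (G : SimpleGraph V) (ε : ℝ) (V1 V2 : Set V) : Prop :=
  IsRegularPair G ε V1 V2 ∧
  (∀ v ∈ V1, dens G V1 V2 * V2.ncard / 10 ≤ ((G.neighborSet v ∩ V2).ncard : ℝ)) ∧
  (∀ v ∈ V2, dens G V1 V2 * V1.ncard / 10 ≤ ((G.neighborSet v ∩ V1).ncard : ℝ))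

/-- A graph has property `M_t` if it contains a matching saturating `⌈t⌉` vertices which is
contained in a single non-bipartite connected component. -/
def PropertyM {V : Type} (H : SimpleGraph V) (t : ℝ) : Prop :=
  ∃ M : H.Subgraph, M.IsMatching ∧ ⌈t⌉ ≤ (M.verts.ncard : ℤ) ∧
    ∃ c : H.ConnectedComponent, M.verts ⊆ c.supp ∧ ¬ (H.induce c.supp).Colorable 2


namespace BH
variable {V : Type}

variable {V : Type}

open scoped Classical in
lemma interCount_eq_sum [Fintype V] (G : SimpleGraph V) (S T : Set V) :
    interCount G S T = ∑ v ∈ S.toFinset, (G.neighborSet v ∩ T).ncard := by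
  classical
  have hset : {p : V × V | p.1 ∈ S ∧ p.2 ∈ T ∧ G.Adj p.1 p.2}
      = ↑((S.toFinset ×ˢ T.toFinset).filter fun p => G.Adj p.1 p.2) := by
    ext p
    simp only [Set.mem_setOf_eq, Finset.coe_filter, Finset.mem_product, Set.mem_toFinset,
      Set.mem_setOf_eq]
    tauto
  rw [interCount, hset, Set.ncard_coe_finset]
  rw [Finset.card_eq_sum_card_fiberwise (f := Prod.fst) (t := S.toFinset)
    (by intro p hp; simp only [Finset.mem_coe, Finset.mem_filter, Finset.mem_product, Set.mem_toFinset] at hp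
        simp [hp.1.1])]
  refine Finset.sum_congr rfl fun v hv => ?_
  rw [Set.ncard_eq_toFinset_card']
  apply Finset.card_bij (fun p _ => p.2)
  · intro p hp
    simp only [Finset.mem_filter, Finset.mem_product, Set.mem_toFinset] at hp
    simp only [Set.mem_toFinset, Set.mem_inter_iff, mem_neighborSet]
    exact ⟨hp.2 ▸ hp.1.2, hp.1.1.2⟩
  · intro p hp q hq h
    simp only [Finset.mem_filter] at hp hq
    exact Prod.ext (hp.2.trans hq.2.symm) h
  · intro u hu
    simp only [Set.mem_toFinset, Set.mem_inter_iff, mem_neighborSet] at hu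
    refine ⟨(v, u), ?_, rfl⟩
    simp only [Finset.mem_filter, Finset.mem_product, Set.mem_toFinset] at hv ⊢
    exact ⟨⟨⟨hv, hu.2⟩, hu.1⟩, trivial⟩

lemma interCount_comm (G : SimpleGraph V) (S T : Set V) :
    interCount G S T = interCount G T S := by
  rw [interCount, interCount]
  have : {p : V × V | p.1 ∈ T ∧ p.2 ∈ S ∧ G.Adj p.1 p.2}
      = Prod.swap '' {p : V × V | p.1 ∈ S ∧ p.2 ∈ T ∧ G.Adj p.1 p.2} := by
    ext ⟨a, b⟩
    constructor
    · rintro ⟨h1, h2, h3⟩; exact ⟨(b, a), ⟨h2, h1, h3.symm⟩, rfl⟩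
    · rintro ⟨⟨c, d⟩, ⟨h1, h2, h3⟩, h⟩
      cases h
      exact ⟨h2, h1, h3.symm⟩
  rw [this, Set.ncard_image_of_injective _ Prod.swap_injective]

lemma exists_adj_of_pos {G : SimpleGraph V} {S T : Set V}
    (h : 0 < interCount G S T) : ∃ a ∈ S, ∃ b ∈ T, G.Adj a b := by
  have h2 : ({p : V × V | p.1 ∈ S ∧ p.2 ∈ T ∧ G.Adj p.1 p.2}).ncard ≠ 0 := by
    rw [interCount] at h; omega
  obtain ⟨⟨a, b⟩, h1, h2, h3⟩ := Set.nonempty_of_ncard_ne_zero h2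
  exact ⟨a, h1, b, h2, h3⟩


variable {V : Type}

/-- Alternation: entries of a chain lie alternately in `P` and `Q`. -/
lemma alt_of_chain {rel : V → V → Prop} :
    ∀ (L : List V) (P Q : Set V),
    (∀ a b, rel a b → (a ∈ P ∧ b ∈ Q) ∨ (a ∈ Q ∧ b ∈ P)) →
    (∀ v, v ∈ P → v ∈ Q → False) →
    L.Chain' rel → ∀ x, L.head? = some x → x ∈ P →
    ∀ i (h : i < L.length), L[i] ∈ (if i % 2 = 0 then P else Q)
  | [], _, _, _, _, _, _, _, _ => by intro i hi; simp at hi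
  | [a], P, Q, hrel, hd, hc, x, hx, hxP => by
      intro i hi
      simp only [List.length_singleton] at hi
      interval_cases i
      simp only [List.head?_cons, Option.some.injEq] at hx
      subst hx
      simpa using hxP
  | a :: b :: L, P, Q, hrel, hd, hc, x, hx, hxP => by
      intro i hi
      simp only [List.head?_cons, Option.some.injEq] at hx
      subst hx
      obtain ⟨hab, hc'⟩ := List.isChain_cons_cons.mp hc
      have hbQ : b ∈ Q := by
        rcases hrel _ _ hab with ⟨_, h⟩ | ⟨h, _⟩
        · exact h
        · exact (hd _ hxP h).elim
      match i with
      | 0 => simpa using hxP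
      | (j+1) =>
        have hj : j < (b :: L).length := by simpa using hi
        have IH := alt_of_chain (b :: L) Q P
          (fun a b h => (hrel a b h).symm) (fun v h1 h2 => hd v h2 h1) hc' b rfl hbQ j hj
        rw [List.getElem_cons_succ]
        by_cases hj2 : j % 2 = 0
        · have : (j+1) % 2 ≠ 0 := by omega
          simp only [hj2, if_pos] at IH
          simpa [this] using IH
        · have : (j+1) % 2 = 0 := by omega
          simp only [hj2, if_neg, if_false] at IH
          simpa [this] using IH

lemma mem_union_of_chain {rel : V → V → Prop} {L : List V} {P Q : Set V}
    (hrel : ∀ a b, rel a b → (a ∈ P ∧ b ∈ Q) ∨ (a ∈ Q ∧ b ∈ P))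
    (hd : ∀ v, v ∈ P → v ∈ Q → False)
    (hc : L.Chain' rel) {x} (hx : L.head? = some x) (hxP : x ∈ P) :
    ∀ v ∈ L, v ∈ P ∪ Q := by
  intro v hv
  obtain ⟨i, hi, rfl⟩ := List.mem_iff_getElem.mp hv
  have := alt_of_chain L P Q hrel hd hc x hx hxP i hi
  by_cases h : i % 2 = 0 <;> simp [h] at this <;> [exact Or.inl this; exact Or.inr this]


open scoped Classical in
lemma countP_side {rel : V → V → Prop} :
    ∀ (L : List V) (P Q : Set V),
    (∀ a b, rel a b → (a ∈ P ∧ b ∈ Q) ∨ (a ∈ Q ∧ b ∈ P)) →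
    (∀ v, v ∈ P → v ∈ Q → False) →
    L.Chain' rel → ∀ x, L.head? = some x → x ∈ P →
    L.countP (fun v => decide (v ∈ Q)) ≤ L.length / 2 ∧
    L.countP (fun v => decide (v ∈ P)) ≤ (L.length + 1) / 2
  | [], _, _, _, _, _, _, _, _ => by simp
  | [a], P, Q, hrel, hd, hc, x, hx, hxP => by
      simp only [List.head?_cons, Option.some.injEq] at hx
      subst hx
      have : a ∉ Q := fun h => hd _ hxP h
      simp [List.countP_cons, this, hxP]
  | a :: b :: L, P, Q, hrel, hd, hc, x, hx, hxP => by
      simp only [List.head?_cons, Option.some.injEq] at hx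
      subst hx
      obtain ⟨hab, hc'⟩ := List.isChain_cons_cons.mp hc
      have hbQ : b ∈ Q := by
        rcases hrel _ _ hab with ⟨_, h⟩ | ⟨h, _⟩
        · exact h
        · exact (hd _ hxP h).elim
      have IH := countP_side (b :: L) Q P
        (fun a b h => (hrel a b h).symm) (fun v h1 h2 => hd v h2 h1) hc' b rfl hbQ
      have haQ : a ∉ Q := fun h => hd _ hxP h
      have h1 := IH.1
      have h2 := IH.2
      simp only [List.length_cons] at h1 h2
      constructor
      · rw [List.countP_cons, decide_eq_false haQ]
        simp only [List.length_cons, Bool.false_eq_true, if_false]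
        omega
      · rw [List.countP_cons, decide_eq_true hxP]
        simp only [List.length_cons, if_true]
        omega


variable {V : Type}

/-- Pósa-style single rotation for chains encoded as lists. -/
lemma rotate_chain {rel : V → V → Prop} (hsymm : Symmetric rel) (L : List V)
    (hc : L.Chain' rel) (i : ℕ) (hi1 : i + 1 < L.length)
    (hadj : ∀ z, L.getLast? = some z → rel (L[i]'(by omega)) z) :
    ∃ L' : List V, L'.Chain' rel ∧ L'.Perm L ∧ L'.head? = L.head? ∧
      L'.getLast? = some L[i+1] := by
  have htlen : (L.take (i+1)).length = i + 1 := by rw [List.length_take]; omega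
  refine ⟨L.take (i+1) ++ (L.drop (i+1)).reverse, ?_, ?_, ?_, ?_⟩
  · have hc2 : (L.take (i+1) ++ L.drop (i+1)).Chain' rel := by
      rw [List.take_append_drop]; exact hc
    obtain ⟨h1, h2, h3⟩ := List.isChain_append.mp hc2
    refine List.isChain_append.mpr ⟨h1, ?_, ?_⟩
    · rw [List.isChain_reverse]
      exact h2.imp (fun a b h => hsymm h)
    · intro a ha b hb
      rw [List.head?_reverse] at hb
      have hia : a = L[i]'(by omega) := by
        rw [List.getLast?_eq_getElem?, htlen, Nat.add_sub_cancel,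
          List.getElem?_eq_getElem (by omega)] at ha
        rw [Option.mem_def, Option.some.injEq] at ha
        rw [← ha, List.getElem_take]
      have hbz : L.getLast? = some b := by
        rw [List.getLast?_drop] at hb
        rw [Option.mem_def] at hb
        split at hb
        · exact absurd hb (by simp)
        · exact hb
      subst hia
      exact hadj b hbz
  · have hp : (L.take (i+1) ++ (L.drop (i+1)).reverse).Perm
        (L.take (i+1) ++ L.drop (i+1)) := List.Perm.append_left _ (List.reverse_perm _)
    rwa [List.take_append_drop] at hp
  · rw [List.head?_append, List.head?_take, if_neg (by omega : ¬ i + 1 = 0)]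
    have hne : L ≠ [] := by intro h; rw [h] at hi1; simp at hi1
    obtain ⟨a, l, rfl⟩ := List.exists_cons_of_ne_nil hne
    simp
  · rw [List.getLast?_append, List.getLast?_reverse, List.head?_drop,
      List.getElem?_eq_getElem hi1]
    simp

/-- Build a walk from a chain list. -/
lemma walk_of_list {G : SimpleGraph V} :
    ∀ (L : List V), L.Chain' G.Adj → ∀ x y, L.head? = some x → L.getLast? = some y →
    ∃ p : G.Walk x y, p.support = L
  | [] => by intro _ x y hx _; simp at hx
  | [a] => by
      intro _ x y hx hy
      simp only [List.head?_cons, Option.some.injEq] at hx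
      simp only [List.getLast?_singleton, Option.some.injEq] at hy
      subst hx; subst hy
      exact ⟨Walk.nil, rfl⟩
  | a :: b :: L => by
      intro hc x y hx hy
      simp only [List.head?_cons, Option.some.injEq] at hx
      subst hx
      obtain ⟨hab, hc'⟩ := List.isChain_cons_cons.mp hc
      have hy' : (b :: L).getLast? = some y := by
        rw [← hy]; symm
        exact List.getLast?_cons_cons ..
      obtain ⟨p, hp⟩ := walk_of_list (b :: L) hc' b y rfl hy'
      exact ⟨Walk.cons hab p, by simp [hp]⟩

/-- Assemble a cycle through `w` from a blue path list. -/
lemma cycle_of_list {G : SimpleGraph V} {w x y : V} (L : List V)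
    (hc : L.Chain' G.Adj) (hnd : L.Nodup) (hx : L.head? = some x)
    (hy : L.getLast? = some y) (hwx : G.Adj w x) (hyw : G.Adj y w)
    (hw : w ∉ L) (hlen : 2 ≤ L.length) :
    ∃ (c : G.Walk w w), c.IsCycle ∧ c.length = L.length + 1 := by
  obtain ⟨p, hp⟩ := walk_of_list L hc x y hx hy
  have hpath : p.IsPath := by rw [Walk.isPath_def, hp]; exact hnd
  have hxy : x ≠ y := by
    have h0 : x = L[0]'(by omega) := by
      rw [List.head?_eq_getElem?, List.getElem?_eq_getElem (by omega)] at hx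
      exact (Option.some.injEq _ _).mp hx.symm
    have h1 : y = L[L.length - 1]'(by omega) := by
      rw [List.getLast?_eq_getElem?, List.getElem?_eq_getElem (by omega)] at hy
      exact (Option.some.injEq _ _).mp hy.symm
    intro h
    rw [h0, h1] at h
    have := (List.Nodup.getElem_inj_iff hnd).mp h
    omega
  have hxL : x ∈ L := by
    have : x ∈ p.support := Walk.start_mem_support p
    rwa [hp] at this
  let q := p.concat hyw
  have hqsupp : q.support = L.concat w := by
    rw [Walk.support_concat, hp, List.concat_eq_append]
  have hqpath : q.IsPath := by
    rw [Walk.isPath_def, hqsupp, List.concat_eq_append]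
    rw [List.nodup_append]
    refine ⟨hnd, List.nodup_singleton w, ?_⟩
    intro a ha b hb hab
    rw [List.mem_singleton] at hb
    subst hb
    exact hw (hab ▸ ha)
  refine ⟨Walk.cons hwx q, ?_, ?_⟩
  · rw [Walk.cons_isCycle_iff]
    refine ⟨hqpath, ?_⟩
    intro hmem
    rw [Walk.edges_concat, List.concat_eq_append, List.mem_append] at hmem
    rcases hmem with hmem | hmem
    · have : w ∈ p.support := Walk.fst_mem_support_of_mem_edges p hmem
      rw [hp] at this
      exact hw this
    · simp only [List.mem_singleton] at hmem
      rw [Sym2.eq_iff] at hmem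
      rcases hmem with ⟨h1, h2⟩ | ⟨h1, h2⟩
      · exact hw (h2 ▸ hxL)
      · exact hxy h2
  · have hplen : p.length + 1 = L.length := by
      have := p.length_support
      rw [hp] at this
      omega
    simp only [Walk.length_cons, Walk.length_concat, q]
    omega


variable {V : Type}

lemma append_chain {rel : V → V → Prop} {L : List V} {z u : V}
    (hc : L.Chain' rel) (hnd : L.Nodup) (hz : L.getLast? = some z)
    (hru : rel z u) (hu : u ∉ L) :
    (L ++ [u]).Chain' rel ∧ (L ++ [u]).Nodup ∧ (L ++ [u]).head? = L.head? ∧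
      (L ++ [u]).getLast? = some u ∧ (L ++ [u]).length = L.length + 1 := by
  have hne : L ≠ [] := by intro h; rw [h] at hz; simp at hz
  refine ⟨?_, ?_, ?_, ?_, by simp⟩
  · refine List.isChain_append.mpr ⟨hc, List.isChain_singleton u, ?_⟩
    intro a ha b hb
    simp only [List.head?_cons, Option.mem_def, Option.some.injEq] at hb
    subst hb
    rw [Option.mem_def, hz, Option.some.injEq] at ha
    subst ha
    exact hru
  · rw [List.nodup_append]
    refine ⟨hnd, List.nodup_singleton u, ?_⟩
    intro a ha b hb hab
    rw [List.mem_singleton] at hb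
    subst hb
    exact hu (hab ▸ ha)
  · rw [List.head?_append]
    obtain ⟨a, l, rfl⟩ := List.exists_cons_of_ne_nil hne
    simp
  · rw [List.getLast?_append]
    simp

open scoped Classical in
lemma ncard_inter_list_le [Fintype V] (Q : Set V) (L : List V) :
    (Q ∩ {v | v ∈ L}).ncard ≤ L.countP (fun v => decide (v ∈ Q)) := by
  classical
  have h1 : Q ∩ {v | v ∈ L} = ↑(L.filter (fun v => decide (v ∈ Q))).toFinset := by
    ext v
    simp only [Set.mem_inter_iff, Set.mem_setOf_eq, Finset.coe_sort_coe, List.coe_toFinset,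
      Set.mem_setOf_eq, List.mem_filter, decide_eq_true_eq]
    tauto
  rw [h1, Set.ncard_coe_finset, List.countP_eq_length_filter]
  exact List.toFinset_card_le _

lemma ncard_diff_le_ncard_sub [Fintype V] (Q S : Set V) :
    (Q.ncard : ℝ) - (Q ∩ S).ncard ≤ ((Q \ S).ncard : ℝ) := by
  have h1 : Q ⊆ (Q \ S) ∪ (Q ∩ S) := by
    intro v hv
    by_cases h : v ∈ S
    · exact Or.inr ⟨hv, h⟩
    · exact Or.inl ⟨hv, h⟩
  have h2 : Q.ncard ≤ (Q \ S).ncard + (Q ∩ S).ncard :=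
    le_trans (Set.ncard_le_ncard h1 (Set.toFinite _)) (Set.ncard_union_le _ _)
  have := Nat.cast_le (α := ℝ) |>.mpr h2
  push_cast at this
  linarith

open scoped Classical in
lemma interCount_le_of_bound [Fintype V] (Gb : SimpleGraph V) (S T : Set V) (m : ℝ)
    (hm : 0 ≤ m) (h : ∀ v ∈ S, ((Gb.neighborSet v ∩ T).ncard : ℝ) ≤ m) :
    (interCount Gb S T : ℝ) ≤ S.ncard * m := by
  classical
  rw [interCount_eq_sum]
  push_cast
  calc (∑ v ∈ S.toFinset, ((Gb.neighborSet v ∩ T).ncard : ℝ))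
      ≤ ∑ _v ∈ S.toFinset, m :=
        Finset.sum_le_sum (fun v hv => h v (Set.mem_toFinset.mp hv))
    _ = S.toFinset.card * m := by rw [Finset.sum_const, nsmul_eq_mul]
    _ = S.ncard * m := by rw [Set.ncard_eq_toFinset_card']

lemma ncard_le_of_subset [Fintype V] {S T : Set V} (h : S ⊆ T) :
    (S.ncard : ℝ) ≤ (T.ncard : ℝ) :=
  Nat.cast_le.mpr (Set.ncard_le_ncard h (Set.toFinite _))

lemma ncard_diff_lower [Fintype V] (X Z : Set V) :
    (X.ncard : ℝ) - Z.ncard ≤ ((X \ Z).ncard : ℝ) := by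
  have h1 := ncard_diff_le_ncard_sub X Z
  have h2 : ((X ∩ Z).ncard : ℝ) ≤ (Z.ncard : ℝ) :=
    ncard_le_of_subset Set.inter_subset_right
  linarith



lemma rpow_gap {n : ℕ} (hn : (10:ℝ)^(50:ℕ) ≤ (n:ℝ)) {a b : ℝ} (ha : 0 ≤ a)
    (hab : a + 0.09 ≤ b) : 10000 * (n:ℝ) ^ a ≤ (n:ℝ) ^ b := by
  have h10 : (1:ℝ) ≤ (10:ℝ)^(50:ℕ) := by norm_num
  have hn1 : (1:ℝ) ≤ (n:ℝ) := le_trans h10 hn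
  have hn0 : (0:ℝ) < (n:ℝ) := by linarith
  have key : (10000:ℝ) ≤ (n:ℝ) ^ (0.09:ℝ) := by
    have h1 : ((10:ℝ)^(50:ℕ)) ^ (0.09:ℝ) ≤ (n:ℝ) ^ (0.09:ℝ) :=
      Real.rpow_le_rpow (by positivity) hn (by norm_num)
    have h2 : ((10:ℝ)^(50:ℕ)) ^ (0.09:ℝ) = (10:ℝ) ^ (4.5:ℝ) := by
      rw [← Real.rpow_natCast (10:ℝ) 50, ← Real.rpow_mul (by norm_num)]
      norm_num
    have h3 : (10:ℝ) ^ (4:ℝ) ≤ (10:ℝ) ^ (4.5:ℝ) :=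
      Real.rpow_le_rpow_of_exponent_le (by norm_num) (by norm_num)
    have h4 : (10:ℝ) ^ (4:ℝ) = 10000 := by
      rw [show (4:ℝ) = ((4:ℕ):ℝ) by norm_num, Real.rpow_natCast]
      norm_num
    linarith
  have hsplit : (n:ℝ) ^ b = (n:ℝ) ^ a * (n:ℝ) ^ (b - a) := by
    rw [← Real.rpow_add hn0]; ring_nf
  have h5 : (n:ℝ) ^ (0.09:ℝ) ≤ (n:ℝ) ^ (b - a) :=
    Real.rpow_le_rpow_of_exponent_le hn1 (by linarith)
  have h6 : (0:ℝ) ≤ (n:ℝ) ^ a := Real.rpow_nonneg (le_of_lt hn0) a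
  calc (10000:ℝ) * (n:ℝ) ^ a ≤ (n:ℝ) ^ (0.09:ℝ) * (n:ℝ) ^ a := by nlinarith
    _ ≤ (n:ℝ) ^ (b - a) * (n:ℝ) ^ a := by nlinarith [Real.rpow_nonneg (le_of_lt hn0) (0.09:ℝ)]
    _ = (n:ℝ) ^ b := by rw [hsplit]; ring

lemma rpow_mono {n : ℕ} (hn : (1:ℝ) ≤ (n:ℝ)) {a b : ℝ} (hab : a ≤ b) :
    (n:ℝ) ^ a ≤ (n:ℝ) ^ b := Real.rpow_le_rpow_of_exponent_le hn hab


set_option maxHeartbeats 1000000 in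
open scoped Classical in
lemma core [Fintype V] {Gb : SimpleGraph V} {W1 W2 P Q Y : Set V} {x : V}
    {d p f c s b : ℝ} {K : ℕ}
    (hPW : P ⊆ W1) (hQW : Q ⊆ W2) (hW : Disjoint W1 W2)
    (hD1 : ∀ v ∈ P, d ≤ ((Gb.neighborSet v ∩ Q).ncard : ℝ))
    (hD2 : ∀ v ∈ Q, d ≤ ((Gb.neighborSet v ∩ P).ncard : ℝ))
    (hE : ∀ S T : Set V, S ⊆ W1 → T ⊆ W2 →
      (S.ncard : ℝ) * T.ncard / 2 - b ≤ (interCount Gb S T : ℝ))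
    (hP : p ≤ (P.ncard : ℝ)) (hQp : p ≤ (Q.ncard : ℝ))
    (hb : 0 ≤ b) (hc0 : 0 ≤ c) (hs0 : 0 ≤ s) (hf0 : 0 ≤ f)
    (hfp : f + ((K : ℝ) + 2) / 2 ≤ p)
    (hgrow : b < (d - 1) * f / 2)
    (hendA : b < c * s / 2)
    (hendB : b < (d - c - 1) * (f / 2 - c))
    (hcf : c ≤ f / 2) (hd1 : 1 + c ≤ d)
    (hsY : s ≤ (Y.ncard : ℝ))
    (hxP : x ∈ P)
    (k : ℕ) (hk2 : 2 ≤ k) (hkK : k ≤ K + 2)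
    (hYeven : k % 2 = 0 → Y ⊆ W1 ∧ Disjoint Y P)
    (hYodd : k % 2 = 1 → Y ⊆ W2 ∧ Disjoint Y Q) :
    ∃ (L : List V) (y : V), L.Chain' Gb.Adj ∧ L.Nodup ∧ L.head? = some x ∧
      L.getLast? = some y ∧ y ∈ Y ∧ L.length = k + 1 ∧ ∀ v ∈ L, v ∈ P ∪ Q ∪ Y := by
  classical
  have hdPQ : ∀ v, v ∈ P → v ∈ Q → False := fun v hp hq =>
    Set.disjoint_left.mp hW (hPW hp) (hQW hq)
  set rel : V → V → Prop :=
    fun a b' => Gb.Adj a b' ∧ ((a ∈ P ∧ b' ∈ Q) ∨ (a ∈ Q ∧ b' ∈ P)) with hrel_def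
  have hsymm : Symmetric rel := by
    intro a b' h
    refine ⟨h.1.symm, ?_⟩
    rcases h.2 with ⟨h1, h2⟩ | ⟨h1, h2⟩
    · exact Or.inr ⟨h2, h1⟩
    · exact Or.inl ⟨h2, h1⟩
  have hrelPQ : ∀ a b', rel a b' → (a ∈ P ∧ b' ∈ Q) ∨ (a ∈ Q ∧ b' ∈ P) := fun a b' h => h.2
  have hd0 : (0:ℝ) ≤ d - 1 := by linarith
  have hEsymm : ∀ S T : Set V, S ⊆ W2 → T ⊆ W1 →
      (S.ncard : ℝ) * T.ncard / 2 - b ≤ (interCount Gb S T : ℝ) := by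
    intro S T hS hT
    have h2 := hE T S hT hS
    have h3 : (interCount Gb S T : ℝ) = (interCount Gb T S : ℝ) := by
      rw [interCount_comm]
    rw [h3]
    nlinarith [h2]
  -- free-vertex counting
  have hfree : ∀ L : List V, L.Chain' rel → L.head? = some x → L.length ≤ K + 1 →
      f ≤ ((P \ {v | v ∈ L}).ncard : ℝ) ∧ f ≤ ((Q \ {v | v ∈ L}).ncard : ℝ) := by
    intro L hc hhead hlen
    obtain ⟨hcQ, hcP⟩ := countP_side L P Q hrelPQ hdPQ hc x hhead hxP
    have hcQ' : ((L.countP (fun v => decide (v ∈ Q)) : ℕ) : ℝ) ≤ ((K : ℝ) + 2) / 2 := by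
      have h1 : ((L.countP (fun v => decide (v ∈ Q)) : ℕ) : ℝ) ≤ ((L.length / 2 : ℕ) : ℝ) :=
        Nat.cast_le.mpr hcQ
      have h2 : ((L.length / 2 : ℕ) : ℝ) ≤ (L.length : ℝ) / 2 := Nat.cast_div_le
      have h3 : (L.length : ℝ) ≤ (K : ℝ) + 1 := by exact_mod_cast hlen
      linarith
    have hcP' : ((L.countP (fun v => decide (v ∈ P)) : ℕ) : ℝ) ≤ ((K : ℝ) + 2) / 2 := by
      have h1 : ((L.countP (fun v => decide (v ∈ P)) : ℕ) : ℝ) ≤ (((L.length + 1) / 2 : ℕ) : ℝ) :=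
        Nat.cast_le.mpr hcP
      have h2 : (((L.length + 1) / 2 : ℕ) : ℝ) ≤ ((L.length : ℝ) + 1) / 2 := by
        have := Nat.cast_div_le (α := ℝ) (m := L.length + 1) (n := 2)
        push_cast at this
        linarith
      have h3 : (L.length : ℝ) ≤ (K : ℝ) + 1 := by exact_mod_cast hlen
      linarith
    constructor
    · have h4 : ((P ∩ {v | v ∈ L}).ncard : ℝ) ≤ ((K : ℝ) + 2) / 2 :=
        le_trans (Nat.cast_le.mpr (ncard_inter_list_le P L)) hcP'
      have h5 := ncard_diff_le_ncard_sub P {v | v ∈ L}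
      linarith
    · have h4 : ((Q ∩ {v | v ∈ L}).ncard : ℝ) ≤ ((K : ℝ) + 2) / 2 :=
        le_trans (Nat.cast_le.mpr (ncard_inter_list_le Q L)) hcQ'
      have h5 := ncard_diff_le_ncard_sub Q {v | v ∈ L}
      linarith
  -- the rotation machine
  have rot_machine : ∀ (P' Q' : Set V), ((P' = P ∧ Q' = Q) ∨ (P' = Q ∧ Q' = P)) →
      ∀ (L : List V) (z : V), L.Chain' rel → L.Nodup → L.getLast? = some z → z ∈ P' →
      ∀ (A' : Set V), A' ⊆ (Gb.neighborSet z ∩ Q') → (∀ u ∈ A', u ∈ L) →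
      ∃ Rf' : Finset V, ((A'.ncard : ℝ) - 1 ≤ (Rf'.card : ℝ)) ∧ ((Rf' : Set V) ⊆ P') ∧
        ∀ r ∈ Rf', ∃ L1 : List V, L1.Chain' rel ∧ L1.Nodup ∧ L1.head? = L.head? ∧
          L1.getLast? = some r ∧ L1.Perm L := by
    intro P' Q' hside L z hc hnd hz hzP A' hA'sub hA'L
    obtain ⟨hdisj', hmk, hsucc'⟩ :
        (∀ v, v ∈ P' → v ∈ Q' → False) ∧
        (∀ a b', Gb.Adj a b' → a ∈ P' → b' ∈ Q' → rel a b') ∧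
        (∀ a b', rel a b' → a ∈ Q' → b' ∈ P') := by
      rcases hside with ⟨rfl, rfl⟩ | ⟨rfl, rfl⟩
      · refine ⟨hdPQ, fun a b' h h1 h2 => ⟨h, Or.inl ⟨h1, h2⟩⟩, ?_⟩
        intro a b' h h1
        rcases h.2 with ⟨h2, h3⟩ | ⟨h2, h3⟩
        · exact (hdPQ a h2 h1).elim
        · exact h3
      · refine ⟨fun v h1 h2 => hdPQ v h2 h1, fun a b' h h1 h2 => ⟨h, Or.inr ⟨h1, h2⟩⟩, ?_⟩
        intro a b' h h1
        rcases h.2 with ⟨h2, h3⟩ | ⟨h2, h3⟩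
        · exact h3
        · exact (hdPQ a h1 h2).elim
    have hLlen : 0 < L.length := by
      cases L with
      | nil => simp at hz
      | cons a l => simp
    have hzidx : L[L.length - 1]'(by omega) = z := by
      rw [List.getLast?_eq_getElem?, List.getElem?_eq_getElem (by omega)] at hz
      exact (Option.some.injEq _ _).mp hz
    have hidx : ∀ u ∈ A', List.idxOf u L + 1 < L.length := by
      intro u hu
      have hmem : u ∈ L := hA'L u hu
      have h1 : List.idxOf u L < L.length := List.idxOf_lt_length_iff.mpr hmem
      have hne : List.idxOf u L ≠ L.length - 1 := by
        intro h
        have h2 : L[List.idxOf u L]? = some u := by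
          rw [List.getElem?_eq_getElem h1, List.getElem_idxOf h1]
        rw [h, List.getElem?_eq_getElem (by omega : L.length - 1 < L.length), hzidx] at h2
        have h3 : z = u := (Option.some.injEq _ _).mp h2
        exact hdisj' z hzP (h3 ▸ (hA'sub hu).2)
      omega
    set succ : V → V := fun u => L.getD (List.idxOf u L + 1) z with hsucc_def
    have hsuccA : ∀ u (hu : u ∈ A'), succ u = L[List.idxOf u L + 1]'(hidx u hu) := by
      intro u hu
      show L.getD (List.idxOf u L + 1) z = _
      rw [List.getD_eq_getElem?_getD, List.getElem?_eq_getElem (hidx u hu)]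
      exact Option.getD_some
    have hsuccP' : ∀ u ∈ A', succ u ∈ P' := by
      intro u hu
      have hrel_cons := List.isChain_iff_getElem.mp hc (List.idxOf u L) (by
        have := hidx u hu; omega)
      have huL : L[List.idxOf u L]'(by have := hidx u hu; omega) = u :=
        List.getElem_idxOf _
      rw [huL] at hrel_cons
      rw [hsuccA u hu]
      exact hsucc' u _ hrel_cons (hA'sub hu).2
    refine ⟨(A'.toFinset.image succ).erase z, ?_, ?_, ?_⟩
    · have h1 : (A'.toFinset.image succ).card = A'.toFinset.card := by
        apply Finset.card_image_of_injOn
        intro u hu u' hu' heq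
        have hu2 : u ∈ A' := by simpa using hu
        have hu'2 : u' ∈ A' := by simpa using hu'
        have heq2 : L[List.idxOf u L + 1]'(hidx u hu2) =
            L[List.idxOf u' L + 1]'(hidx u' hu'2) :=
          ((hsuccA u hu2).symm.trans heq).trans (hsuccA u' hu'2)
        have hidxeq := (List.Nodup.getElem_inj_iff hnd).mp heq2
        have h3 : L[List.idxOf u L]? = some u := by
          rw [List.getElem?_eq_getElem (by have := hidx u hu2; omega),
            List.getElem_idxOf]
        have h4 : L[List.idxOf u' L]? = some u' := by
          rw [List.getElem?_eq_getElem (by have := hidx u' hu'2; omega),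
            List.getElem_idxOf]
        have h5 : List.idxOf u L = List.idxOf u' L := by omega
        rw [h5, h4] at h3
        exact ((Option.some.injEq _ _).mp h3).symm
      have h2 := Finset.pred_card_le_card_erase (s := A'.toFinset.image succ) (a := z)
      rw [h1] at h2
      have h3 : A'.toFinset.card = A'.ncard := (Set.ncard_eq_toFinset_card' A').symm
      rw [h3] at h2
      have h4 : (1:ℝ) ≤ 1 := le_refl 1
      have h5 : ((A'.ncard - 1 : ℕ) : ℝ) ≤ (((A'.toFinset.image succ).erase z).card : ℝ) :=
        Nat.cast_le.mpr h2
      have h6 : (A'.ncard : ℝ) - 1 ≤ ((A'.ncard - 1 : ℕ) : ℝ) := by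
        rcases Nat.eq_zero_or_pos A'.ncard with h | h
        · rw [h]; simp
        · rw [Nat.cast_sub h]; simp
      linarith
    · intro r hr
      rw [Finset.coe_erase] at hr
      obtain ⟨hr1, hr2⟩ := hr
      rw [Finset.coe_image] at hr1
      obtain ⟨u, hu, rfl⟩ := hr1
      have hu2 : u ∈ A' := by simpa using hu
      exact hsuccP' u hu2
    · intro r hr
      obtain ⟨hrz, hrim⟩ := Finset.mem_erase.mp hr
      obtain ⟨u, hu, rfl⟩ := Finset.mem_image.mp hrim
      rw [Set.mem_toFinset] at hu
      have hrotadj : ∀ z', L.getLast? = some z' →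
          rel (L[List.idxOf u L]'(by have := hidx u hu; omega)) z' := by
        intro z' hz'
        rw [hz] at hz'
        have hz'' : z = z' := (Option.some.injEq _ _).mp hz'
        subst hz''
        have huL : L[List.idxOf u L]'(by have := hidx u hu; omega) = u :=
          List.getElem_idxOf _
        rw [huL]
        exact hsymm (hmk z u (hA'sub hu).1 hzP (hA'sub hu).2)
      obtain ⟨L1, hc1, hperm1, hh1, hl1⟩ :=
        rotate_chain hsymm L hc (List.idxOf u L) (hidx u hu) hrotadj
      rw [← hsuccA u hu] at hl1
      exact ⟨L1, hc1, hperm1.symm.nodup hnd, hh1, hl1, hperm1⟩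

  -- one growth step
  have main_step : ∀ (P' Q' : Set V), ((P' = P ∧ Q' = Q) ∨ (P' = Q ∧ Q' = P)) →
      ∀ (L : List V) (z : V), L.Chain' rel → L.Nodup → L.head? = some x →
      L.length ≤ K + 1 → L.getLast? = some z → z ∈ P' →
      ∃ (L' : List V) (z' : V), L'.Chain' rel ∧ L'.Nodup ∧ L'.head? = some x ∧
        L'.length = L.length + 1 ∧ L'.getLast? = some z' ∧ z' ∈ Q' := by
    intro P' Q' hside L z hc hnd hhead hlen hz hzP
    obtain ⟨hD1', hmk, hEPQ', hfQ'⟩ :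
        (∀ v ∈ P', d ≤ ((Gb.neighborSet v ∩ Q').ncard : ℝ)) ∧
        (∀ a b', Gb.Adj a b' → a ∈ P' → b' ∈ Q' → rel a b') ∧
        (∀ S T : Set V, S ⊆ P' → T ⊆ Q' →
          (S.ncard : ℝ) * T.ncard / 2 - b ≤ (interCount Gb S T : ℝ)) ∧
        (f ≤ ((Q' \ {v | v ∈ L}).ncard : ℝ)) := by
      rcases hside with ⟨rfl, rfl⟩ | ⟨rfl, rfl⟩
      · exact ⟨hD1, fun a b' h h1 h2 => ⟨h, Or.inl ⟨h1, h2⟩⟩,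
          fun S T hS hT => hE S T (hS.trans hPW) (hT.trans hQW),
          (hfree L hc hhead hlen).2⟩
      · exact ⟨hD2, fun a b' h h1 h2 => ⟨h, Or.inr ⟨h1, h2⟩⟩,
          fun S T hS hT => hEsymm S T (hS.trans hQW) (hT.trans hPW),
          (hfree L hc hhead hlen).1⟩
    by_cases hstuck : ∃ u, u ∈ Gb.neighborSet z ∩ Q' ∧ u ∉ L
    · obtain ⟨u, hu1, hu2⟩ := hstuck
      have hrzu : rel z u := hmk z u hu1.1 hzP hu1.2
      obtain ⟨hc', hnd', hh', hl', hlen'⟩ := append_chain hc hnd hz hrzu hu2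
      exact ⟨L ++ [u], u, hc', hnd', by rw [hh']; exact hhead, hlen', hl', hu1.2⟩
    · push_neg at hstuck
      have hA : d ≤ ((Gb.neighborSet z ∩ Q').ncard : ℝ) := hD1' z hzP
      obtain ⟨Rf', hRcard, hRsub, hRrot⟩ := rot_machine P' Q' hside L z hc hnd hz hzP
        (Gb.neighborSet z ∩ Q') (subset_refl _) (fun u hu => hstuck u hu)
      set F : Set V := Q' \ {v | v ∈ L} with hFdef
      have hIC : (0:ℝ) < (interCount Gb (↑Rf') F : ℝ) := by
        have hlow := hEPQ' (↑Rf') F hRsub (fun v hv => hv.1)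
        rw [Set.ncard_coe_finset] at hlow
        have hcard : d - 1 ≤ (Rf'.card : ℝ) := by linarith
        have hprod : (d - 1) * f ≤ (Rf'.card : ℝ) * (F.ncard : ℝ) :=
          mul_le_mul hcard hfQ' hf0 (Nat.cast_nonneg _)
        nlinarith
      have hICn : 0 < interCount Gb (↑Rf') F := by exact_mod_cast hIC
      obtain ⟨r, hrS, u', hu'F, hadj⟩ := exists_adj_of_pos hICn
      have hrR : r ∈ Rf' := Finset.mem_coe.mp hrS
      obtain ⟨L1, hc1, hnd1, hh1, hl1, hperm1⟩ := hRrot r hrR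
      have hu'L1 : u' ∉ L1 := fun h => hu'F.2 (hperm1.mem_iff.mp h)
      have hrrel : rel r u' := hmk r u' hadj (hRsub hrS) hu'F.1
      obtain ⟨hc2, hnd2, hh2, hl2, hlen2⟩ := append_chain hc1 hnd1 hl1 hrrel hu'L1
      exact ⟨L1 ++ [u'], u', hc2, hnd2, by rw [hh2, hh1]; exact hhead,
        by rw [hlen2, hperm1.length_eq], hl2, hu'F.1⟩
  -- growth by induction
  have grow : ∀ t, t ≤ K →
      ∃ L : List V, L.Chain' rel ∧ L.Nodup ∧ L.head? = some x ∧ L.length = t + 1 := by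
    intro t
    induction t with
    | zero => exact fun _ => ⟨[x], List.isChain_singleton x, List.nodup_singleton x, rfl, rfl⟩
    | succ t IH =>
      intro ht
      obtain ⟨L, hc, hnd, hh, hlen⟩ := IH (by omega)
      have hLne : L ≠ [] := by intro h; rw [h] at hlen; simp at hlen
      have hz : L.getLast? = some (L.getLast hLne) :=
        List.getLast?_eq_getLast_of_ne_nil hLne
      have hzPQ : L.getLast hLne ∈ P ∪ Q :=
        mem_union_of_chain hrelPQ hdPQ hc hh hxP _ (List.mem_of_mem_getLast? (by rw [hz]; rfl))
      rcases hzPQ with hzP | hzQ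
      · obtain ⟨L', z', h1, h2, h3, h4, h5, h6⟩ :=
          main_step P Q (Or.inl ⟨rfl, rfl⟩) L _ hc hnd hh (by omega) hz hzP
        exact ⟨L', h1, h2, h3, by rw [h4, hlen]⟩
      · obtain ⟨L', z', h1, h2, h3, h4, h5, h6⟩ :=
          main_step Q P (Or.inr ⟨rfl, rfl⟩) L _ hc hnd hh (by omega) hz hzQ
        exact ⟨L', h1, h2, h3, by rw [h4, hlen]⟩
  -- the endgame
  have main_end : ∀ (P' Q' : Set V), ((P' = P ∧ Q' = Q) ∨ (P' = Q ∧ Q' = P)) →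
      (∀ a ∈ Y, a ∉ P') → (∀ a ∈ Y, a ∉ Q') →
      (∀ S T : Set V, S ⊆ Q' → T ⊆ Y →
        (S.ncard : ℝ) * T.ncard / 2 - b ≤ (interCount Gb S T : ℝ)) →
      ∀ (L : List V) (z : V), L.Chain' rel → L.Nodup → L.head? = some x →
      L.length = k - 1 → L.getLast? = some z → z ∈ P' →
      ∃ (LF : List V) (y : V), LF.Chain' Gb.Adj ∧ LF.Nodup ∧ LF.head? = some x ∧
        LF.getLast? = some y ∧ y ∈ Y ∧ LF.length = k + 1 ∧ ∀ v ∈ LF, v ∈ P ∪ Q ∪ Y := by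
    intro P' Q' hside hYP' hYQ' hEQY L z hc hnd hhead hlen hz hzP
    have hlenK : L.length ≤ K + 1 := by omega
    obtain ⟨hD1', hmk, hEPQ', hfQ', hunion⟩ :
        (∀ v ∈ P', d ≤ ((Gb.neighborSet v ∩ Q').ncard : ℝ)) ∧
        (∀ a b', Gb.Adj a b' → a ∈ P' → b' ∈ Q' → rel a b') ∧
        (∀ S T : Set V, S ⊆ P' → T ⊆ Q' →
          (S.ncard : ℝ) * T.ncard / 2 - b ≤ (interCount Gb S T : ℝ)) ∧
        (f ≤ ((Q' \ {v | v ∈ L}).ncard : ℝ)) ∧ (P' ∪ Q' = P ∪ Q) := by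
      rcases hside with ⟨rfl, rfl⟩ | ⟨rfl, rfl⟩
      · exact ⟨hD1, fun a b' h h1 h2 => ⟨h, Or.inl ⟨h1, h2⟩⟩,
          fun S T hS hT => hE S T (hS.trans hPW) (hT.trans hQW),
          (hfree L hc hhead hlenK).2, rfl⟩
      · exact ⟨hD2, fun a b' h h1 h2 => ⟨h, Or.inr ⟨h1, h2⟩⟩,
          fun S T hS hT => hEsymm S T (hS.trans hQW) (hT.trans hPW),
          (hfree L hc hhead hlenK).1, Set.union_comm _ _⟩
    set Lset : Set V := {v | v ∈ L} with hLsetdef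
    have hmemL : ∀ v ∈ L, v ∈ P ∪ Q := mem_union_of_chain hrelPQ hdPQ hc hhead hxP
    have finish : ∀ (L1 : List V) (z1 : V), L1.Chain' rel → L1.Nodup → L1.head? = some x →
        L1.getLast? = some z1 → (∀ v, v ∈ L1 ↔ v ∈ L) → L1.length = k - 1 → z1 ∈ P' →
        c ≤ (((Gb.neighborSet z1 ∩ Q') \ Lset).ncard : ℝ) →
        ∃ (LF : List V) (y : V), LF.Chain' Gb.Adj ∧ LF.Nodup ∧ LF.head? = some x ∧
          LF.getLast? = some y ∧ y ∈ Y ∧ LF.length = k + 1 ∧ ∀ v ∈ LF, v ∈ P ∪ Q ∪ Y := by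
      intro L1 z1 hc1 hnd1 hh1 hl1 hmem1 hlen1 hz1P hD0c
      set D0 : Set V := (Gb.neighborSet z1 ∩ Q') \ Lset with hD0def
      have hICY : (0:ℝ) < (interCount Gb D0 Y : ℝ) := by
        have hlow := hEQY D0 Y (fun a ha => ha.1.2) (subset_refl _)
        have hprod : c * s ≤ (D0.ncard : ℝ) * (Y.ncard : ℝ) :=
          mul_le_mul hD0c hsY hs0 (Nat.cast_nonneg _)
        nlinarith
      obtain ⟨v, hvD0, y, hyY, hvadj⟩ := exists_adj_of_pos (by exact_mod_cast hICY)
      have hzv : Gb.Adj z1 v := hvD0.1.1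
      have hcA : L1.Chain' Gb.Adj := hc1.imp (fun a b' h => h.1)
      have hvL1 : v ∉ L1 := fun h => hvD0.2 ((hmem1 v).mp h)
      obtain ⟨hc2, hnd2, hh2, hl2, hlen2⟩ := append_chain hcA hnd1 hl1 hzv hvL1
      have hyL : y ∉ L1 ++ [v] := by
        intro hmem
        rcases List.mem_append.mp hmem with hy1 | hy2
        · have hPQ := hmemL y ((hmem1 y).mp hy1)
          rw [← hunion] at hPQ
          rcases hPQ with h | h
          · exact hYP' y hyY h
          · exact hYQ' y hyY h
        · rw [List.mem_singleton] at hy2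
          exact hYQ' y hyY (hy2 ▸ hvD0.1.2)
      obtain ⟨hc3, hnd3, hh3, hl3, hlen3⟩ := append_chain hc2 hnd2 hl2 hvadj hyL
      refine ⟨(L1 ++ [v]) ++ [y], y, hc3, hnd3, by rw [hh3, hh2]; exact hh1, hl3, hyY, ?_, ?_⟩
      · rw [hlen3, hlen2, hlen1]; omega
      · intro a ha
        rcases List.mem_append.mp ha with ha | ha
        · rcases List.mem_append.mp ha with ha | ha
          · exact Or.inl (hmemL a ((hmem1 a).mp ha))
          · rw [List.mem_singleton] at ha
            subst ha
            refine Or.inl ?_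
            rw [← hunion]
            exact Or.inr hvD0.1.2
        · rw [List.mem_singleton] at ha
          exact ha ▸ Or.inr hyY
    by_cases hD0z : c ≤ (((Gb.neighborSet z ∩ Q') \ Lset).ncard : ℝ)
    · exact finish L z hc hnd hhead hz (fun v => Iff.rfl) hlen hzP hD0z
    · push_neg at hD0z
      have hA := hD1' z hzP
      have hsplitcard : d - c ≤ (((Gb.neighborSet z ∩ Q') ∩ Lset).ncard : ℝ) := by
        have h1 : (Gb.neighborSet z ∩ Q') ⊆
            ((Gb.neighborSet z ∩ Q') \ Lset) ∪ ((Gb.neighborSet z ∩ Q') ∩ Lset) := by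
          intro a ha
          by_cases h : a ∈ Lset
          · exact Or.inr ⟨ha, h⟩
          · exact Or.inl ⟨ha, h⟩
        have h2 := le_trans (Set.ncard_le_ncard h1 (Set.toFinite _)) (Set.ncard_union_le _ _)
        have h3 := Nat.cast_le (α := ℝ) |>.mpr h2
        push_cast at h3
        linarith
      obtain ⟨Rf', hRcard, hRsub, hRrot⟩ := rot_machine P' Q' hside L z hc hnd hz hzP
        ((Gb.neighborSet z ∩ Q') ∩ Lset) (fun a ha => ha.1) (fun a ha => ha.2)
      set F : Set V := Q' \ Lset with hFdef
      have hclaim : ∃ r ∈ Rf', c ≤ ((Gb.neighborSet r ∩ F).ncard : ℝ) := by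
        by_contra hno
        push_neg at hno
        have hup := interCount_le_of_bound Gb (↑Rf') F c hc0
          (fun v hv => le_of_lt (hno v (Finset.mem_coe.mp hv)))
        have hlow := hEPQ' (↑Rf') F hRsub (fun a ha => ha.1)
        rw [Set.ncard_coe_finset] at hlow hup
        have h0 : (0:ℝ) ≤ (Rf'.card : ℝ) := Nat.cast_nonneg _
        have hrge : d - c - 1 ≤ (Rf'.card : ℝ) := by linarith
        have hfF : f ≤ (F.ncard : ℝ) := hfQ'
        have hstep1 : (Rf'.card : ℝ) * (f / 2 - c) ≤ b := by nlinarith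
        have hstep2 : (d - c - 1) * (f / 2 - c) ≤ (Rf'.card : ℝ) * (f / 2 - c) :=
          mul_le_mul_of_nonneg_right hrge (by linarith)
        linarith
      obtain ⟨r, hrR, hrc⟩ := hclaim
      obtain ⟨L1, hc1, hnd1, hh1, hl1, hperm1⟩ := hRrot r hrR
      have hmem1 : ∀ v, v ∈ L1 ↔ v ∈ L := fun v => hperm1.mem_iff
      have hrc' : c ≤ (((Gb.neighborSet r ∩ Q') \ Lset).ncard : ℝ) := by
        have heq : Gb.neighborSet r ∩ F = (Gb.neighborSet r ∩ Q') \ Lset := by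
          rw [hFdef]
          ext a
          simp only [Set.mem_inter_iff, Set.mem_diff]
          tauto
        rwa [heq] at hrc
      exact finish L1 r hc1 hnd1 (by rw [hh1]; exact hhead) hl1 hmem1
        (by rw [hperm1.length_eq, hlen]) (hRsub (Finset.mem_coe.mpr hrR)) hrc'
  -- assemble
  obtain ⟨L, hc, hnd, hh, hlen⟩ := grow (k - 2) (by omega)
  have hlen' : L.length = k - 1 := by omega
  have hLne : L ≠ [] := by intro h; rw [h] at hlen; simp at hlen
  have hz : L.getLast? = some (L.getLast hLne) := List.getLast?_eq_getLast_of_ne_nil hLne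
  have hzidx : L[L.length - 1]'(by
      have : 0 < L.length := List.length_pos_iff.mpr hLne; omega) = L.getLast hLne := by
    rw [List.getLast?_eq_getElem?, List.getElem?_eq_getElem (by
      have : 0 < L.length := List.length_pos_iff.mpr hLne; omega)] at hz
    exact (Option.some.injEq _ _).mp hz
  have halt := alt_of_chain L P Q hrelPQ hdPQ hc x hh hxP (L.length - 1) (by
    have : 0 < L.length := List.length_pos_iff.mpr hLne; omega)
  rw [hzidx] at halt
  have hpar : (L.length - 1) % 2 = k % 2 := by omega
  rw [hpar] at halt
  rcases Nat.mod_two_eq_zero_or_one k with hk | hk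
  · obtain ⟨hYW1, hYdP⟩ := hYeven hk
    rw [hk] at halt
    simp only [if_pos rfl] at halt
    exact main_end P Q (Or.inl ⟨rfl, rfl⟩)
      (fun a ha h => Set.disjoint_left.mp hYdP ha h)
      (fun a ha h => Set.disjoint_left.mp hW (hYW1 ha) (hQW h))
      (fun S T hS hT => hEsymm S T (hS.trans hQW) (hT.trans hYW1))
      L _ hc hnd hh hlen' hz halt
  · obtain ⟨hYW2, hYdQ⟩ := hYodd hk
    rw [hk] at halt
    simp only [if_neg one_ne_zero] at halt
    exact main_end Q P (Or.inr ⟨rfl, rfl⟩)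
      (fun a ha h => Set.disjoint_left.mp hYdQ ha h)
      (fun a ha h => Set.disjoint_left.mp hW.symm (hYW2 ha) (hPW h))
      (fun S T hS hT => hE S T (hS.trans hPW) (hT.trans hYW2))
      L _ hc hnd hh hlen' hz halt



end BH

open BH in
set_option maxHeartbeats 2000000 in
/-- For sufficiently large `n`: if the edges of an `n`-fit graph are 2-colored,
`V1, V2` are disjoint sets of size at least `0.99n` with all edges between them blue, and
some vertex `w` has at least `n^0.9` blue neighbors in each of `V1` and `V2`, then the blue
graph contains `C_ℓ` for every `3 ≤ ℓ ≤ n`. -/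
theorem blue_hub_gives_blue_cycles :
    ∃ N : ℕ, ∀ n : ℕ, N ≤ n →
    ∀ (V : Type) (G : SimpleGraph V), IsNFit n G →
    ∀ R : SimpleGraph V, R ≤ G →
    ∀ V1 V2 : Set V, Disjoint V1 V2 →
    (0.99 : ℝ) * n ≤ (V1.ncard : ℝ) → (0.99 : ℝ) * n ≤ (V2.ncard : ℝ) →
    (∀ v ∈ V1, ∀ w ∈ V2, G.Adj v w → ¬ R.Adj v w) →
    (∃ w : V, (n : ℝ) ^ (0.9 : ℝ) ≤ (((G \ R).neighborSet w ∩ V1).ncard : ℝ) ∧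
              (n : ℝ) ^ (0.9 : ℝ) ≤ (((G \ R).neighborSet w ∩ V2).ncard : ℝ)) →
    ∀ ℓ : ℕ, 3 ≤ ℓ → ℓ ≤ n → HasCycleLen (G \ R) ℓ := by
  classical
  refine ⟨10 ^ 50, ?_⟩
  intro n hn V G hfit R hR V1 V2 hdisj hV1 hV2 hblue hw ℓ hl3 hln
  obtain ⟨hcard, _, _, _, _, hiv⟩ := hfit
  have hn50 : (10:ℝ)^(50:ℕ) ≤ (n:ℝ) := by
    calc ((10:ℝ)^(50:ℕ)) = (((10^50 : ℕ) : ℕ) : ℝ) := by push_cast; ring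
      _ ≤ (n:ℝ) := Nat.cast_le.mpr hn
  have hn4 : 4 ≤ n := le_trans (by norm_num) hn
  haveI : Finite V := (Nat.card_pos_iff.mp (by rw [hcard]; omega)).2
  haveI : Fintype V := Fintype.ofFinite V
  obtain ⟨w, hwA, hwB⟩ := hw
  set Gb : SimpleGraph V := G \ R with hGbdef
  set nR : ℝ := (n : ℝ) with hnRdef

  have hnpos : (0:ℝ) < nR := by
    have : (0:ℝ) < (10:ℝ)^(50:ℕ) := by positivity
    rw [hnRdef]; linarith
  have hn1 : (1:ℝ) ≤ nR := by
    have : (1:ℝ) ≤ (10:ℝ)^(50:ℕ) := by norm_num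
    rw [hnRdef]; linarith
  set e8 : ℝ := nR ^ (0.8:ℝ) with he8def
  set e9 : ℝ := nR ^ (0.9:ℝ) with he9def
  set e17 : ℝ := nR ^ (1.7:ℝ) with he17def
  have he8pos : (0:ℝ) < e8 := by rw [he8def]; positivity
  have he9pos : (0:ℝ) < e9 := by rw [he9def]; positivity
  have he17pos : (0:ℝ) < e17 := by rw [he17def]; positivity
  have g1 : 10000 * e8 ≤ e9 := rpow_gap hn50 (by norm_num) (by norm_num)
  have g2 : 10000 * e9 ≤ nR := by
    have h := rpow_gap hn50 (a := (0.9:ℝ)) (b := (1:ℝ)) (by norm_num) (by norm_num)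
    rwa [Real.rpow_one] at h
  have g6 : (10000:ℝ) ≤ e8 := by
    have h := rpow_gap hn50 (a := (0:ℝ)) (b := (0.8:ℝ)) (by norm_num) (by norm_num)
    rwa [Real.rpow_zero, mul_one] at h
  have g7 : (10000:ℝ) ≤ nR := by nlinarith
  have hsum18 : nR ^ (1.8:ℝ) = nR * e8 := by
    rw [he8def]
    nth_rewrite 2 [← Real.rpow_one nR]
    rw [← Real.rpow_add hnpos]
    norm_num
  have g3 : 10000 * e17 ≤ nR * e8 := by
    have h := rpow_gap hn50 (a := (1.7:ℝ)) (b := (1.8:ℝ)) (by norm_num) (by norm_num)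
    rwa [hsum18] at h
  have hsq : nR ^ (2:ℝ) = nR * nR := by
    rw [show (2:ℝ) = ((2:ℕ):ℝ) by norm_num, Real.rpow_natCast]; ring
  have g4 : 10000 * e17 ≤ nR * nR := by
    have h := rpow_gap hn50 (a := (1.7:ℝ)) (b := (2:ℝ)) (by norm_num) (by norm_num)
    rwa [hsq] at h
  have g5 : e9 * e9 = nR * e8 := by
    rw [he9def, ← Real.rpow_add hnpos, show (0.9:ℝ) + 0.9 = 1.8 by norm_num, hsum18]
  -- blue edges between V1 and V2
  have hblue' : ∀ v ∈ V1, ∀ u ∈ V2, (Gb.Adj v u ↔ G.Adj v u) := by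
    intro v hv u hu
    rw [hGbdef, SimpleGraph.sdiff_adj]
    exact ⟨fun h => h.1, fun h => ⟨h, hblue v hv u hu h⟩⟩
  have hblue2 : ∀ v ∈ V2, ∀ u ∈ V1, (Gb.Adj v u ↔ G.Adj v u) := by
    intro v hv u hu
    rw [SimpleGraph.adj_comm, hblue' u hu v hv, SimpleGraph.adj_comm]
  have hEG : ∀ S T : Set V, S ⊆ V1 → T ⊆ V2 → interCount Gb S T = interCount G S T := by
    intro S T hS hT
    unfold interCount
    congr 1
    ext p
    simp only [Set.mem_setOf_eq]
    constructor
    · rintro ⟨h1, h2, h3⟩; exact ⟨h1, h2, (hblue' p.1 (hS h1) p.2 (hT h2)).mp h3⟩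
    · rintro ⟨h1, h2, h3⟩; exact ⟨h1, h2, (hblue' p.1 (hS h1) p.2 (hT h2)).mpr h3⟩
  have hEQG : ∀ S T : Set V, (S.ncard : ℝ) * T.ncard / 2 - e17 ≤ (interCount G S T : ℝ) := by
    intro S T
    have h := abs_le.mp (hiv S T)
    linarith [h.1]
  have hEQ : ∀ S T : Set V, S ⊆ V1 → T ⊆ V2 →
      (S.ncard : ℝ) * T.ncard / 2 - e17 ≤ (interCount Gb S T : ℝ) := by
    intro S T hS hT
    rw [hEG S T hS hT]
    exact hEQG S T
  set q1R : ℝ := (V1.ncard : ℝ) with hq1def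
  set q2R : ℝ := (V2.ncard : ℝ) with hq2def
  have hq1 : 0.99 * nR ≤ q1R := hV1
  have hq2 : 0.99 * nR ≤ q2R := hV2
  -- bad sets
  set Bad1 : Set V := {v | v ∈ V1 ∧ ((G.neighborSet v ∩ V2).ncard : ℝ) < q2R/2 - e9}
    with hBad1def
  set Bad2 : Set V := {v | v ∈ V2 ∧ ((G.neighborSet v ∩ V1).ncard : ℝ) < q1R/2 - e9}
    with hBad2def
  have hBadBound : ∀ (Bd W : Set V) (qW : ℝ), 0.99 * nR ≤ qW → qW = (W.ncard : ℝ) →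
      (∀ v ∈ Bd, ((G.neighborSet v ∩ W).ncard : ℝ) < qW/2 - e9) →
      (Bd.ncard : ℝ) ≤ e8 := by
    intro Bd W qW hqW hqWdef hBd
    have hnn : (0:ℝ) ≤ qW/2 - e9 := by linarith
    have hub := interCount_le_of_bound G Bd W (qW/2 - e9) hnn
      (fun v hv => le_of_lt (hBd v hv))
    have hlb := hEQG Bd W
    rw [← hqWdef] at hlb
    have hexp : (Bd.ncard : ℝ) * (qW/2 - e9) = (Bd.ncard : ℝ) * qW / 2 - (Bd.ncard : ℝ) * e9 := by
      ring
    have hBe9 : (Bd.ncard : ℝ) * e9 ≤ e17 := by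
      rw [hexp] at hub
      linarith
    have h17eq : e17 = e8 * e9 := by
      rw [he17def, he8def, he9def, ← Real.rpow_add hnpos]; norm_num
    rw [h17eq] at hBe9
    exact le_of_mul_le_mul_right hBe9 he9pos
  have hBad1c : (Bad1.ncard : ℝ) ≤ e8 :=
    hBadBound Bad1 V2 q2R hq2 rfl (fun v hv => hv.2)
  have hBad2c : (Bad2.ncard : ℝ) ≤ e8 :=
    hBadBound Bad2 V1 q1R hq1 rfl (fun v hv => hv.2)
  -- the two hub neighbourhoods
  set A : Set V := (Gb.neighborSet w ∩ V1) \ Bad1 with hAdef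
  set B2 : Set V := (Gb.neighborSet w ∩ V2) \ Bad2 with hB2def
  have hAc : e9 - e8 ≤ (A.ncard : ℝ) := by
    have h := ncard_diff_lower (Gb.neighborSet w ∩ V1) Bad1
    rw [← hAdef] at h
    linarith [hwA]
  have hB2c : e9 - e8 ≤ (B2.ncard : ℝ) := by
    have h := ncard_diff_lower (Gb.neighborSet w ∩ V2) Bad2
    rw [← hB2def] at h
    linarith [hwB]
  -- generic runner
  have run : ∀ (Y : Set V) (x : V) (k : ℕ), 2 ≤ k → k ≤ n - 2 →
      Y ⊆ Gb.neighborSet w →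
      (k % 2 = 0 → Y ⊆ V1) → (k % 2 = 1 → Y ⊆ V2) →
      x ∈ A → x ∉ Y → e8 ≤ (Y.ncard : ℝ) → (Y.ncard : ℝ) ≤ e8 + 1 →
      HasCycleLen Gb (k + 2) := by
    intro Y x k hk2 hkn hYw hYe hYo hxA hxY hYc1 hYc2
    set P : Set V := (V1 \ Bad1) \ (Y ∪ {w}) with hPdef
    set Q : Set V := (V2 \ Bad2) \ (Y ∪ {w}) with hQdef
    have hPV1 : P ⊆ V1 := fun a ha => ha.1.1
    have hQV2 : Q ⊆ V2 := fun a ha => ha.1.1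
    have hremove : ((Y ∪ {w}).ncard : ℝ) ≤ e8 + 2 := by
      have u1 := Set.ncard_union_le Y ({w} : Set V)
      have u2 : (({w} : Set V)).ncard = 1 := Set.ncard_singleton w
      have u3 := Nat.cast_le (α := ℝ) |>.mpr u1
      push_cast at u3
      rw [u2] at u3
      push_cast at u3
      linarith
    have hD1 : ∀ v ∈ P, 0.45 * nR ≤ ((Gb.neighborSet v ∩ Q).ncard : ℝ) := by
      intro v hv
      have hv1 : v ∈ V1 := hv.1.1
      have hvB : v ∉ Bad1 := hv.1.2
      have hdegG : q2R/2 - e9 ≤ ((G.neighborSet v ∩ V2).ncard : ℝ) := by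
        by_contra hlt
        push_neg at hlt
        exact hvB ⟨hv1, hlt⟩
      have hsub : (G.neighborSet v ∩ V2) \ (Bad2 ∪ (Y ∪ {w})) ⊆ Gb.neighborSet v ∩ Q := by
        intro u hu
        obtain ⟨⟨hu1, hu2⟩, hu3⟩ := hu
        refine ⟨?_, ⟨hu2, fun hB => hu3 (Or.inl hB)⟩, fun hYw' => hu3 (Or.inr hYw')⟩
        exact (hblue' v hv1 u hu2).mpr hu1
      have h1 := ncard_diff_lower (G.neighborSet v ∩ V2) (Bad2 ∪ (Y ∪ {w}))
      have h2 : ((Bad2 ∪ (Y ∪ {w})).ncard : ℝ) ≤ e8 + (e8 + 2) := by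
        have u1 := Set.ncard_union_le Bad2 (Y ∪ {w})
        have u3 := Nat.cast_le (α := ℝ) |>.mpr u1
        push_cast at u3
        linarith
      have h3 := ncard_le_of_subset hsub
      have hnum : e9 + (e8 + (e8 + 2)) ≤ 0.045 * nR := by linarith
      linarith
    have hD2 : ∀ v ∈ Q, 0.45 * nR ≤ ((Gb.neighborSet v ∩ P).ncard : ℝ) := by
      intro v hv
      have hv1 : v ∈ V2 := hv.1.1
      have hvB : v ∉ Bad2 := hv.1.2
      have hdegG : q1R/2 - e9 ≤ ((G.neighborSet v ∩ V1).ncard : ℝ) := by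
        by_contra hlt
        push_neg at hlt
        exact hvB ⟨hv1, hlt⟩
      have hsub : (G.neighborSet v ∩ V1) \ (Bad1 ∪ (Y ∪ {w})) ⊆ Gb.neighborSet v ∩ P := by
        intro u hu
        obtain ⟨⟨hu1, hu2⟩, hu3⟩ := hu
        refine ⟨?_, ⟨hu2, fun hB => hu3 (Or.inl hB)⟩, fun hYw' => hu3 (Or.inr hYw')⟩
        exact (hblue2 v hv1 u hu2).mpr hu1
      have h1 := ncard_diff_lower (G.neighborSet v ∩ V1) (Bad1 ∪ (Y ∪ {w}))
      have h2 : ((Bad1 ∪ (Y ∪ {w})).ncard : ℝ) ≤ e8 + (e8 + 2) := by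
        have u1 := Set.ncard_union_le Bad1 (Y ∪ {w})
        have u3 := Nat.cast_le (α := ℝ) |>.mpr u1
        push_cast at u3
        linarith
      have h3 := ncard_le_of_subset hsub
      have hnum : e9 + (e8 + (e8 + 2)) ≤ 0.045 * nR := by linarith
      linarith
    have hPc : 0.97 * nR ≤ (P.ncard : ℝ) := by
      have heq : P = V1 \ (Bad1 ∪ (Y ∪ {w})) := by rw [hPdef, Set.diff_diff]
      rw [heq]
      have h1 := ncard_diff_lower V1 (Bad1 ∪ (Y ∪ {w}))
      have h2 : ((Bad1 ∪ (Y ∪ {w})).ncard : ℝ) ≤ e8 + (e8 + 2) := by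
        have u1 := Set.ncard_union_le Bad1 (Y ∪ {w})
        have u3 := Nat.cast_le (α := ℝ) |>.mpr u1
        push_cast at u3
        linarith
      have hnum : e8 + (e8 + 2) ≤ 0.02 * nR := by linarith
      linarith
    have hQc : 0.97 * nR ≤ (Q.ncard : ℝ) := by
      have heq : Q = V2 \ (Bad2 ∪ (Y ∪ {w})) := by rw [hQdef, Set.diff_diff]
      rw [heq]
      have h1 := ncard_diff_lower V2 (Bad2 ∪ (Y ∪ {w}))
      have h2 : ((Bad2 ∪ (Y ∪ {w})).ncard : ℝ) ≤ e8 + (e8 + 2) := by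
        have u1 := Set.ncard_union_le Bad2 (Y ∪ {w})
        have u3 := Nat.cast_le (α := ℝ) |>.mpr u1
        push_cast at u3
        linarith
      have hnum : e8 + (e8 + 2) ≤ 0.02 * nR := by linarith
      linarith
    have hxw : x ≠ w := by
      have hadj : Gb.Adj w x := hxA.1.1
      exact fun h => (Gb.irrefl (h ▸ hadj))
    have hxP : x ∈ P := by
      refine ⟨⟨hxA.1.2, hxA.2⟩, ?_⟩
      rintro (h | h)
      · exact hxY h
      · exact hxw h
    have hKcast : ((n - 4 : ℕ) : ℝ) = nR - 4 := by
      rw [hnRdef]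
      push_cast [Nat.cast_sub hn4]
      ring
    have hone : (1:ℝ) ≤ 0.05 * nR := by linarith
    have hnn2 : (0:ℝ) < nR * nR := by positivity
    have hne8 : (0:ℝ) < nR * e8 := by positivity
    have hc0' : (0:ℝ) ≤ 0.05 * nR := by linarith
    have hf0' : (0:ℝ) ≤ 0.45 * nR := by linarith
    have hfp' : 0.45 * nR + (((n - 4 : ℕ) : ℝ) + 2) / 2 ≤ 0.97 * nR := by
      rw [hKcast]; linarith
    have hA1 : e17 ≤ 0.0001 * (nR * nR) := by linarith
    have hgrow' : e17 < (0.45 * nR - 1) * (0.45 * nR) / 2 := by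
      have h1 : 0.4 * nR ≤ 0.45 * nR - 1 := by linarith
      have h2 : 0.4 * nR * (0.45 * nR) ≤ (0.45 * nR - 1) * (0.45 * nR) :=
        mul_le_mul_of_nonneg_right h1 (by linarith)
      have h3 : 0.4 * nR * (0.45 * nR) = 0.18 * (nR * nR) := by ring
      linarith
    have hendA' : e17 < 0.05 * nR * e8 / 2 := by
      have h1 : 0.05 * nR * e8 / 2 = 0.025 * (nR * e8) := by ring
      linarith
    have hendB' : e17 < (0.45 * nR - 0.05 * nR - 1) * (0.45 * nR / 2 - 0.05 * nR) := by
      have h1 : 0.35 * nR ≤ 0.45 * nR - 0.05 * nR - 1 := by linarith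
      have h2 : 0.35 * nR * (0.45 * nR / 2 - 0.05 * nR) ≤
          (0.45 * nR - 0.05 * nR - 1) * (0.45 * nR / 2 - 0.05 * nR) :=
        mul_le_mul_of_nonneg_right h1 (by linarith)
      have h3 : 0.35 * nR * (0.45 * nR / 2 - 0.05 * nR) = 0.06125 * (nR * nR) := by ring
      linarith
    have hcf' : 0.05 * nR ≤ 0.45 * nR / 2 := by linarith
    have hd1' : 1 + 0.05 * nR ≤ 0.45 * nR := by linarith
    obtain ⟨L, y, hcL, hndL, hhL, hlL, hyY, hlenL, hmemL⟩ :=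
      core (Gb := Gb) (W1 := V1) (W2 := V2) (P := P) (Q := Q) (Y := Y) (x := x)
        (d := 0.45 * nR) (p := 0.97 * nR) (f := 0.45 * nR) (c := 0.05 * nR)
        (s := e8) (b := e17) (K := n - 4)
        hPV1 hQV2 hdisj hD1 hD2 hEQ hPc hQc
        (le_of_lt he17pos) hc0' (le_of_lt he8pos) hf0'
        hfp' hgrow' hendA' hendB' hcf' hd1'
        hYc1 hxP k hk2 (by omega)
        (fun hke => ⟨hYe hke, Set.disjoint_left.mpr (fun a haY haP => haP.2 (Or.inl haY))⟩)
        (fun hko => ⟨hYo hko, Set.disjoint_left.mpr (fun a haY haQ => haQ.2 (Or.inl haY))⟩)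
    have hwx : Gb.Adj w x := hxA.1.1
    have hyw : Gb.Adj y w := (hYw hyY).symm
    have hwL : w ∉ L := by
      intro hwl
      rcases hmemL w hwl with (h | h) | h
      · exact h.2 (Or.inr rfl)
      · exact h.2 (Or.inr rfl)
      · exact Gb.irrefl (hYw h)
    obtain ⟨cyc, hcyc, hcyclen⟩ := cycle_of_list L hcL hndL hhL hlL hwx hyw hwL (by omega)
    exact ⟨w, cyc, hcyc, by rw [hcyclen, hlenL]⟩
  -- choose Y and x and conclude
  rcases Nat.lt_or_ge ℓ 4 with hl4 | hl4
  · -- ℓ = 3 : a triangle through w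
    have hl3' : ℓ = 3 := by omega
    have hAV1 : A ⊆ V1 := fun a ha => ha.1.2
    have hB2V2 : B2 ⊆ V2 := fun a ha => ha.1.2
    have hIC : 0 < interCount Gb A B2 := by
      have hlow := hEQ A B2 hAV1 hB2V2
      have hprod : (e9 - e8) * (e9 - e8) ≤ (A.ncard : ℝ) * (B2.ncard : ℝ) :=
        mul_le_mul hAc hB2c (by linarith) (Nat.cast_nonneg _)
      have hq1' : 0.5 * e9 ≤ e9 - e8 := by linarith
      have hq2' : (0.5 * e9) * (0.5 * e9) ≤ (e9 - e8) * (e9 - e8) :=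
        mul_le_mul hq1' hq1' (by linarith) (by linarith)
      have hq3 : (0.5 * e9) * (0.5 * e9) = 0.25 * (e9 * e9) := by ring
      have hne8 : (0:ℝ) < nR * e8 := by positivity
      have hpos : (0:ℝ) < (interCount Gb A B2 : ℝ) := by
        rw [g5] at hq3
        linarith
      exact_mod_cast hpos
    obtain ⟨a, haA, bv, hbB, hab⟩ := exists_adj_of_pos hIC
    have habne : a ≠ bv := fun h => Set.disjoint_left.mp hdisj (hAV1 haA) (h ▸ hB2V2 hbB)
    have hwa : Gb.Adj w a := haA.1.1
    have hbw : Gb.Adj bv w := (hbB.1.1 : Gb.Adj w bv).symm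
    have hwnot : w ∉ [a, bv] := by
      intro hmem
      simp only [List.mem_cons, List.mem_singleton, List.not_mem_nil, or_false] at hmem
      rcases hmem with h | h
      · exact Gb.irrefl (h ▸ hwa)
      · exact Gb.irrefl (h ▸ hbw.symm)
    obtain ⟨cyc, hcyc, hcyclen⟩ := cycle_of_list (G := Gb) [a, bv]
      (List.isChain_pair.mpr hab) (by simp [habne]) rfl rfl hwa hbw hwnot (by simp)
    exact ⟨w, cyc, hcyc, by simpa [hl3'] using hcyclen⟩
  · set k : ℕ := ℓ - 2 with hkdef
    have hk2 : 2 ≤ k := by omega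
    have hkn : k ≤ n - 2 := by omega
    have hkl : k + 2 = ℓ := by omega
    set mY : ℕ := ⌈e8⌉₊ with hmYdef
    have hmY1 : e8 ≤ (mY : ℝ) := Nat.le_ceil e8
    have hmY2 : (mY : ℝ) ≤ e8 + 1 := le_of_lt (Nat.ceil_lt_add_one (le_of_lt he8pos))
    rcases Nat.mod_two_eq_zero_or_one k with hpar | hpar
    · -- even : endpoints both in A
      have hmYA : mY ≤ A.ncard := by
        have : (mY : ℝ) ≤ (A.ncard : ℝ) := by linarith
        exact_mod_cast this
      obtain ⟨Y, hYsub, hYcard⟩ := Set.exists_subset_card_eq hmYA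
      have hAYne : ((A \ Y).ncard : ℝ) > 0 := by
        have h := ncard_diff_lower A Y
        rw [hYcard] at h
        linarith
      have : (A \ Y).Nonempty := by
        apply Set.nonempty_of_ncard_ne_zero
        intro h
        rw [h] at hAYne
        norm_num at hAYne
      obtain ⟨x, hxA, hxY⟩ := this
      have hcyc := run Y x k hk2 hkn
        (fun a ha => (hYsub ha).1.1)
        (fun _ => fun a ha => (hYsub ha).1.2)
        (fun ho => absurd hpar (by omega))
        hxA hxY (by rw [hYcard]; exact hmY1) (by rw [hYcard]; exact hmY2)
      rwa [hkl] at hcyc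
    · -- odd : other endpoint in B2
      have hmYB : mY ≤ B2.ncard := by
        have : (mY : ℝ) ≤ (B2.ncard : ℝ) := by linarith
        exact_mod_cast this
      obtain ⟨Y, hYsub, hYcard⟩ := Set.exists_subset_card_eq hmYB
      have hAne : A.Nonempty := by
        apply Set.nonempty_of_ncard_ne_zero
        intro h
        have h0 : ((A.ncard : ℕ) : ℝ) = 0 := by rw [h]; norm_num
        linarith
      obtain ⟨x, hxA⟩ := hAne
      have hxY : x ∉ Y := fun h =>
        Set.disjoint_left.mp hdisj (hxA.1.2) ((hYsub h).1.2)
      have hcyc := run Y x k hk2 hkn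
        (fun a ha => (hYsub ha).1.1)
        (fun he => absurd hpar (by omega))
        (fun _ => fun a ha => (hYsub ha).1.2)
        hxA hxY (by rw [hYcard]; exact hmY1) (by rw [hYcard]; exact hmY2)
      rwa [hkl] at hcyc
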